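/- Steepest-descent monotonicity along the quintic rays: Define F : ℂ → ℝ on the complement of {±2^{1/3}} by F(w) = Re(−w³/3 − 2^{2/3}·w) + log |w + 2^{1/3}| − log |w − 2^{1/3}| (real logarithms of complex absolute values). Then the function ρ ↦ F(ρ·exp(3πi/5)) is strictly decreasing on [0, ∞), and the function ρ ↦ F(ρ·exp(2πi/5)) is strictly increasing on [0, ∞). -/

import Mathlib

open Complex

private noncomputable def gq (θ : ℝ) (ρ : ℝ) : ℝ :=
  -(ρ^3 * Real.cos (3*θ))/3 - (2:ℝ)^((2:ℝ)/3) * (ρ * Real.cos θ)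
    + Real.log ((ρ*Real.cos θ + (2:ℝ)^((1:ℝ)/3))^2 + (ρ*Real.sin θ)^2) / 2
    - Real.log ((ρ*Real.cos θ - (2:ℝ)^((1:ℝ)/3))^2 + (ρ*Real.sin θ)^2) / 2

private lemma hapos : (0:ℝ) < (2:ℝ)^((1:ℝ)/3) := Real.rpow_pos_of_pos two_pos _

private lemma ha3 : ((2:ℝ)^((1:ℝ)/3))^3 = 2 := by
  rw [← Real.rpow_natCast ((2:ℝ)^((1:ℝ)/3)) 3, ← Real.rpow_mul (by norm_num)]
  norm_num

private lemma hA2 : (2:ℝ)^((2:ℝ)/3) = ((2:ℝ)^((1:ℝ)/3))^2 := by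
  rw [← Real.rpow_natCast ((2:ℝ)^((1:ℝ)/3)) 2, ← Real.rpow_mul (by norm_num)]
  norm_num

private lemma Nppos (θ ρ : ℝ) (hs : Real.sin θ ≠ 0) :
    (0:ℝ) < (ρ*Real.cos θ + (2:ℝ)^((1:ℝ)/3))^2 + (ρ*Real.sin θ)^2 := by
  rcases eq_or_ne ρ 0 with h | h
  · have := hapos; simp [h]; positivity
  · have h1 : 0 < (ρ * Real.sin θ)^2 := by positivity
    nlinarith [sq_nonneg (ρ*Real.cos θ + (2:ℝ)^((1:ℝ)/3))]

private lemma Nmpos (θ ρ : ℝ) (hs : Real.sin θ ≠ 0) :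
    (0:ℝ) < (ρ*Real.cos θ - (2:ℝ)^((1:ℝ)/3))^2 + (ρ*Real.sin θ)^2 := by
  rcases eq_or_ne ρ 0 with h | h
  · have := hapos; simp [h]; positivity
  · have h1 : 0 < (ρ * Real.sin θ)^2 := by positivity
    nlinarith [sq_nonneg (ρ*Real.cos θ - (2:ℝ)^((1:ℝ)/3))]

private lemma value_eq (ρ c s a : ℝ) (h1 : s^2 + c^2 = 1) (h2 : a^3 = 2)
    (hp : (0:ℝ) < (ρ*c+a)^2+(ρ*s)^2) (hm : (0:ℝ) < (ρ*c-a)^2+(ρ*s)^2) :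
    -(ρ^2*(4*c^3-3*c)) - a^2*c
      + (2*(ρ*c+a)*c + 2*(ρ*s)*s)/((ρ*c+a)^2+(ρ*s)^2)/2
      - (2*(ρ*c-a)*c + 2*(ρ*s)*s)/((ρ*c-a)^2+(ρ*s)^2)/2
    = ρ^4*(a^2*(16*c^5-20*c^3+5*c) - ρ^2*(4*c^3-3*c)) /
        (((ρ*c+a)^2+(ρ*s)^2)*((ρ*c-a)^2+(ρ*s)^2)) := by
  have e₁ : (ρ*c+a)^2+(ρ*s)^2 = ρ^2 + 2*a*ρ*c + a^2 := by linear_combination ρ^2*h1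
  have e₂ : (ρ*c-a)^2+(ρ*s)^2 = ρ^2 - 2*a*ρ*c + a^2 := by linear_combination ρ^2*h1
  have f₁ : 2*(ρ*c+a)*c + 2*(ρ*s)*s = 2*(ρ+a*c) := by linear_combination 2*ρ*h1
  have f₂ : 2*(ρ*c-a)*c + 2*(ρ*s)*s = 2*(ρ-a*c) := by linear_combination 2*ρ*h1
  rw [e₁, e₂, f₁, f₂]
  rw [e₁] at hp; rw [e₂] at hm
  have key : (-(ρ^2*(4*c^3-3*c)) - a^2*c) * ((ρ^2+2*a*ρ*c+a^2)*(ρ^2-2*a*ρ*c+a^2))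
      + (ρ+a*c)*(ρ^2-2*a*ρ*c+a^2) - (ρ-a*c)*(ρ^2+2*a*ρ*c+a^2)
      = ρ^4*(a^2*(16*c^5-20*c^3+5*c) - ρ^2*(4*c^3-3*c)) := by
    linear_combination (c*a*ρ^2 - c*a^3) * h2
  rw [← key]
  have hP := hp.ne'
  have hM := hm.ne'
  generalize ρ^2+2*a*ρ*c+a^2 = P at *
  generalize ρ^2-2*a*ρ*c+a^2 = M at *
  field_simp

private lemma cos5 (x : ℝ) :
    Real.cos (5 * x) = 16 * Real.cos x ^ 5 - 20 * Real.cos x ^ 3 + 5 * Real.cos x := by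
  have h : (5:ℝ) * x = 2*x + 3*x := by ring
  rw [h, Real.cos_add, Real.cos_two_mul, Real.sin_two_mul, Real.cos_three_mul,
    Real.sin_three_mul]
  linear_combination (10*Real.cos x - 16*Real.cos x^3 +
    8*Real.cos x*(Real.sin x^2 + Real.cos x^2 - 1)) * Real.sin_sq_add_cos_sq x

private lemma gq_hasDeriv (θ : ℝ) (hs : Real.sin θ ≠ 0) (ρ : ℝ) :
    HasDerivAt (gq θ)
      (ρ^4 * ((2:ℝ)^((2:ℝ)/3) * Real.cos (5*θ) - ρ^2 * Real.cos (3*θ)) /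
        (((ρ*Real.cos θ + (2:ℝ)^((1:ℝ)/3))^2 + (ρ*Real.sin θ)^2) *
         ((ρ*Real.cos θ - (2:ℝ)^((1:ℝ)/3))^2 + (ρ*Real.sin θ)^2))) ρ := by
  have hp := Nppos θ ρ hs
  have hm := Nmpos θ ρ hs
  have h1 : HasDerivAt
      (fun ρ : ℝ => -(ρ^3 * Real.cos (3*θ))/3 - (2:ℝ)^((2:ℝ)/3) * (ρ*Real.cos θ))
      (-(3*ρ^2 * Real.cos (3*θ))/3 - (2:ℝ)^((2:ℝ)/3) * (1*Real.cos θ)) ρ := by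
    have hp3 : HasDerivAt (fun ρ : ℝ => ρ^3) (3*ρ^2) ρ := by
      simpa using hasDerivAt_pow 3 ρ
    exact (((hp3.mul_const (Real.cos (3*θ))).neg.div_const 3).sub
      (((hasDerivAt_id ρ).mul_const (Real.cos θ)).const_mul ((2:ℝ)^((2:ℝ)/3))))
  have hup : HasDerivAt
      (fun ρ : ℝ => (ρ*Real.cos θ + (2:ℝ)^((1:ℝ)/3))^2 + (ρ*Real.sin θ)^2)
      (2*(ρ*Real.cos θ + (2:ℝ)^((1:ℝ)/3))*(1*Real.cos θ)
        + 2*(ρ*Real.sin θ)*(1*Real.sin θ)) ρ := by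
    have g1 := (((hasDerivAt_id ρ).mul_const (Real.cos θ)).add_const
      ((2:ℝ)^((1:ℝ)/3))).pow 2
    have g2 := ((hasDerivAt_id ρ).mul_const (Real.sin θ)).pow 2
    refine (g1.add g2).congr_deriv ?_
    simp
  have hum : HasDerivAt
      (fun ρ : ℝ => (ρ*Real.cos θ - (2:ℝ)^((1:ℝ)/3))^2 + (ρ*Real.sin θ)^2)
      (2*(ρ*Real.cos θ - (2:ℝ)^((1:ℝ)/3))*(1*Real.cos θ)
        + 2*(ρ*Real.sin θ)*(1*Real.sin θ)) ρ := by
    have g1 := (((hasDerivAt_id ρ).mul_const (Real.cos θ)).sub_const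
      ((2:ℝ)^((1:ℝ)/3))).pow 2
    have g2 := ((hasDerivAt_id ρ).mul_const (Real.sin θ)).pow 2
    refine (g1.add g2).congr_deriv ?_
    simp
  have hlp := (hup.log hp.ne').div_const 2
  have hlm := (hum.log hm.ne').div_const 2
  have total := (h1.add hlp).sub hlm
  have hgq : gq θ = fun ρ : ℝ =>
      (-(ρ^3 * Real.cos (3*θ))/3 - (2:ℝ)^((2:ℝ)/3) * (ρ*Real.cos θ)
        + Real.log ((ρ*Real.cos θ + (2:ℝ)^((1:ℝ)/3))^2 + (ρ*Real.sin θ)^2) / 2)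
      - Real.log ((ρ*Real.cos θ - (2:ℝ)^((1:ℝ)/3))^2 + (ρ*Real.sin θ)^2) / 2 := by
    funext x; simp only [gq]
  rw [hgq]
  refine total.congr_deriv ?_
  rw [Real.cos_three_mul, cos5, hA2,
    ← value_eq ρ (Real.cos θ) (Real.sin θ) ((2:ℝ)^((1:ℝ)/3))
      (Real.sin_sq_add_cos_sq θ) ha3 hp hm]
  ring_nf

private lemma pointwise (θ ρ : ℝ) :
    (-(((ρ : ℂ) * Complex.exp (((θ : ℝ) : ℂ) * Complex.I)) ^ 3) / 3 -
        (((2 : ℝ) ^ ((2 : ℝ) / 3) : ℝ) : ℂ) *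
          ((ρ : ℂ) * Complex.exp (((θ : ℝ) : ℂ) * Complex.I))).re +
      Real.log (norm
        ((ρ : ℂ) * Complex.exp (((θ : ℝ) : ℂ) * Complex.I) +
          (((2:ℝ)^((1:ℝ)/3) : ℝ) : ℂ))) -
      Real.log (norm
        ((ρ : ℂ) * Complex.exp (((θ : ℝ) : ℂ) * Complex.I) -
          (((2:ℝ)^((1:ℝ)/3) : ℝ) : ℂ))) = gq θ ρ := by
  have he : Complex.exp (((θ : ℝ) : ℂ) * Complex.I)
      = Complex.ofReal (Real.cos θ) + Complex.ofReal (Real.sin θ) * Complex.I := by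
    rw [Complex.exp_mul_I]
    simp [Complex.ofReal_cos, Complex.ofReal_sin]
  simp only [gq]
  rw [he, Complex.norm_def, Complex.norm_def, Real.log_sqrt (Complex.normSq_nonneg _),
    Real.log_sqrt (Complex.normSq_nonneg _), Real.cos_three_mul]
  simp only [Complex.normSq_apply, Complex.add_re, Complex.add_im, Complex.sub_re,
    Complex.sub_im, Complex.mul_re, Complex.mul_im, Complex.ofReal_re, Complex.ofReal_im,
    Complex.I_re, Complex.I_im, Complex.neg_re, Complex.neg_im, Complex.div_re,
    Complex.div_im, Complex.normSq_ofNat, Complex.re_ofNat, Complex.im_ofNat,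
    pow_succ, pow_zero, one_mul]
  ring_nf
  linear_combination (ρ^3 * Real.cos θ) * Real.sin_sq_add_cos_sq θ

private lemma anti_ray : StrictAntiOn (gq (3 * Real.pi / 5)) (Set.Ici 0) := by
  have hpi := Real.pi_pos
  have hs : Real.sin (3 * Real.pi / 5) ≠ 0 :=
    (Real.sin_pos_of_pos_of_lt_pi (by linarith) (by linarith)).ne'
  have hc5 : Real.cos (5 * (3 * Real.pi / 5)) = -1 := by
    have h : 5 * (3 * Real.pi / 5) = Real.pi + 2 * Real.pi := by ring
    rw [h, Real.cos_add_two_pi, Real.cos_pi]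
  have hc3 : 0 < Real.cos (3 * (3 * Real.pi / 5)) := by
    have h : 3 * (3 * Real.pi / 5) = 2 * Real.pi - Real.pi / 5 := by ring
    rw [h, Real.cos_two_pi_sub]
    exact Real.cos_pos_of_mem_Ioo ⟨by linarith, by linarith⟩
  apply strictAntiOn_of_deriv_neg (convex_Ici 0)
  · exact fun ρ _ => ((gq_hasDeriv _ hs ρ).differentiableAt.continuousAt).continuousWithinAt
  · intro ρ hρ
    rw [interior_Ici] at hρ
    rw [(gq_hasDeriv _ hs ρ).deriv, hc5]
    apply div_neg_of_neg_of_pos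
    · have h4 : (0:ℝ) < ρ^4 := pow_pos hρ 4
      have hA : (0:ℝ) < (2:ℝ)^((2:ℝ)/3) := Real.rpow_pos_of_pos two_pos _
      have h2 : (0:ℝ) < ρ^2 := pow_pos hρ 2
      have : (2:ℝ)^((2:ℝ)/3) * (-1) - ρ^2 * Real.cos (3 * (3 * Real.pi / 5)) < 0 := by
        nlinarith
      exact mul_neg_of_pos_of_neg h4 this
    · exact mul_pos (Nppos _ ρ hs) (Nmpos _ ρ hs)

private lemma mono_ray : StrictMonoOn (gq (2 * Real.pi / 5)) (Set.Ici 0) := by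
  have hpi := Real.pi_pos
  have hs : Real.sin (2 * Real.pi / 5) ≠ 0 :=
    (Real.sin_pos_of_pos_of_lt_pi (by linarith) (by linarith)).ne'
  have hc5 : Real.cos (5 * (2 * Real.pi / 5)) = 1 := by
    have h : 5 * (2 * Real.pi / 5) = 2 * Real.pi := by ring
    rw [h, Real.cos_two_pi]
  have hc3 : Real.cos (3 * (2 * Real.pi / 5)) < 0 := by
    have h : 3 * (2 * Real.pi / 5) = Real.pi / 5 + Real.pi := by ring
    rw [h, Real.cos_add, Real.cos_pi, Real.sin_pi]
    have : 0 < Real.cos (Real.pi / 5) :=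
      Real.cos_pos_of_mem_Ioo ⟨by linarith, by linarith⟩
    nlinarith
  apply strictMonoOn_of_deriv_pos (convex_Ici 0)
  · exact fun ρ _ => ((gq_hasDeriv _ hs ρ).differentiableAt.continuousAt).continuousWithinAt
  · intro ρ hρ
    rw [interior_Ici] at hρ
    rw [(gq_hasDeriv _ hs ρ).deriv, hc5]
    apply div_pos
    · have h4 : (0:ℝ) < ρ^4 := pow_pos hρ 4
      have hA : (0:ℝ) < (2:ℝ)^((2:ℝ)/3) := Real.rpow_pos_of_pos two_pos _
      have h2 : (0:ℝ) < ρ^2 := pow_pos hρ 2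
      have : 0 < (2:ℝ)^((2:ℝ)/3) * 1 - ρ^2 * Real.cos (3 * (2 * Real.pi / 5)) := by
        nlinarith
      exact mul_pos h4 this
    · exact mul_pos (Nppos _ ρ hs) (Nmpos _ ρ hs)

/-- Steepest-descent monotonicity along the quintic rays: with
`F(w) = Re(−w³/3 − 2^{2/3}·w) + log |w + 2^{1/3}| − log |w − 2^{1/3}|`,
the function `ρ ↦ F(ρ·e^{3πi/5})` is strictly decreasing on `[0, ∞)` and
`ρ ↦ F(ρ·e^{2πi/5})` is strictly increasing on `[0, ∞)`. -/
theorem quintic_rays_steepest_descent :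
    StrictAntiOn
        (fun ρ : ℝ =>
          (-(((ρ : ℂ) * Complex.exp (((3 * Real.pi / 5 : ℝ) : ℂ) * Complex.I)) ^ 3) / 3 -
              (((2 : ℝ) ^ ((2 : ℝ) / 3) : ℝ) : ℂ) *
                ((ρ : ℂ) * Complex.exp (((3 * Real.pi / 5 : ℝ) : ℂ) * Complex.I))).re +
            Real.log (norm
              ((ρ : ℂ) * Complex.exp (((3 * Real.pi / 5 : ℝ) : ℂ) * Complex.I) +
                (((2 : ℝ) ^ ((1 : ℝ) / 3) : ℝ) : ℂ))) -
            Real.log (norm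
              ((ρ : ℂ) * Complex.exp (((3 * Real.pi / 5 : ℝ) : ℂ) * Complex.I) -
                (((2 : ℝ) ^ ((1 : ℝ) / 3) : ℝ) : ℂ))))
        (Set.Ici 0) ∧
      StrictMonoOn
        (fun ρ : ℝ =>
          (-(((ρ : ℂ) * Complex.exp (((2 * Real.pi / 5 : ℝ) : ℂ) * Complex.I)) ^ 3) / 3 -
              (((2 : ℝ) ^ ((2 : ℝ) / 3) : ℝ) : ℂ) *
                ((ρ : ℂ) * Complex.exp (((2 * Real.pi / 5 : ℝ) : ℂ) * Complex.I))).re +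
            Real.log (norm
              ((ρ : ℂ) * Complex.exp (((2 * Real.pi / 5 : ℝ) : ℂ) * Complex.I) +
                (((2 : ℝ) ^ ((1 : ℝ) / 3) : ℝ) : ℂ))) -
            Real.log (norm
              ((ρ : ℂ) * Complex.exp (((2 * Real.pi / 5 : ℝ) : ℂ) * Complex.I) -
                (((2 : ℝ) ^ ((1 : ℝ) / 3) : ℝ) : ℂ))))
        (Set.Ici 0) := by
  constructor
  · have h : (fun ρ : ℝ =>
        (-(((ρ : ℂ) * Complex.exp (((3 * Real.pi / 5 : ℝ) : ℂ) * Complex.I)) ^ 3) / 3 -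
            (((2 : ℝ) ^ ((2 : ℝ) / 3) : ℝ) : ℂ) *
              ((ρ : ℂ) * Complex.exp (((3 * Real.pi / 5 : ℝ) : ℂ) * Complex.I))).re +
          Real.log (norm
            ((ρ : ℂ) * Complex.exp (((3 * Real.pi / 5 : ℝ) : ℂ) * Complex.I) +
              (((2 : ℝ) ^ ((1 : ℝ) / 3) : ℝ) : ℂ))) -
          Real.log (norm
            ((ρ : ℂ) * Complex.exp (((3 * Real.pi / 5 : ℝ) : ℂ) * Complex.I) -
              (((2 : ℝ) ^ ((1 : ℝ) / 3) : ℝ) : ℂ)))) = gq (3 * Real.pi / 5) :=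
      funext fun ρ => pointwise (3 * Real.pi / 5) ρ
    rw [h]
    exact anti_ray
  · have h : (fun ρ : ℝ =>
        (-(((ρ : ℂ) * Complex.exp (((2 * Real.pi / 5 : ℝ) : ℂ) * Complex.I)) ^ 3) / 3 -
            (((2 : ℝ) ^ ((2 : ℝ) / 3) : ℝ) : ℂ) *
              ((ρ : ℂ) * Complex.exp (((2 * Real.pi / 5 : ℝ) : ℂ) * Complex.I))).re +
          Real.log (norm
            ((ρ : ℂ) * Complex.exp (((2 * Real.pi / 5 : ℝ) : ℂ) * Complex.I) +
              (((2 : ℝ) ^ ((1 : ℝ) / 3) : ℝ) : ℂ))) -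
          Real.log (norm
            ((ρ : ℂ) * Complex.exp (((2 * Real.pi / 5 : ℝ) : ℂ) * Complex.I) -
              (((2 : ℝ) ^ ((1 : ℝ) / 3) : ℝ) : ℂ)))) = gq (2 * Real.pi / 5) :=
      funext fun ρ => pointwise (2 * Real.pi / 5) ρ
    rw [h]
    exact mono_ray
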